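/- Let a be a positive integer and G a graph on n vertices with minimum degree δ(G) ≥ a. If the spectral radius satisfies ρ(G) ≥ n - 2, then the complement of G has at most n - ⌈a/2⌉ - 1 edges. -/

import Mathlib

open SimpleGraph Finset
open scoped Classical

lemma adjMatrix_isHermitian {V : Type*} [Fintype V] (G : SimpleGraph V)
    [DecidableRel G.Adj] : (G.adjMatrix ℝ).IsHermitian := by
  ext i j
  simp [Matrix.conjTranspose_apply, SimpleGraph.adjMatrix_apply, SimpleGraph.adj_comm]

/-- The spectral radius of a graph: the largest eigenvalue of its adjacency matrix. -/
noncomputable def specRad {n : ℕ} (G : SimpleGraph (Fin n)) : ℝ := by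
  classical
  exact ⨆ i, (adjMatrix_isHermitian G).eigenvalues i

open Matrix in
lemma specRad_eq {n : ℕ} (G : SimpleGraph (Fin n)) [inst : DecidableRel G.Adj] :
    specRad G = ⨆ i, (adjMatrix_isHermitian G).eigenvalues i := by
  unfold specRad
  congr!

open Matrix in
lemma rayleigh_le {n : ℕ} [Nonempty (Fin n)] {A : Matrix (Fin n) (Fin n) ℝ} (hA : A.IsHermitian)
    (z : Fin n → ℝ) : z ⬝ᵥ (A *ᵥ z) ≤ (⨆ i, hA.eigenvalues i) * (z ⬝ᵥ z) := by
  classical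
  set μ := ⨆ i, hA.eigenvalues i with hμ
  have hb : ∀ i, hA.eigenvalues i ≤ μ := fun i =>
    le_ciSup (Set.Finite.bddAbove (Set.finite_range _)) i
  set b := hA.eigenvectorBasis with hbdef
  let z' : EuclideanSpace ℝ (Fin n) := WithLp.toLp 2 z
  have hAt : Aᵀ = A := by simpa [Matrix.conjTranspose_eq_transpose_of_trivial] using hA.eq
  have hsym : ∀ i, (⇑(b i) : Fin n → ℝ) ⬝ᵥ (A *ᵥ z) = hA.eigenvalues i * ((⇑(b i) : Fin n → ℝ) ⬝ᵥ z) := by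
    intro i
    rw [Matrix.dotProduct_mulVec, ← Matrix.mulVec_transpose, hAt, hA.mulVec_eigenvectorBasis]
    simp [hbdef]
  have hinner : ∀ (p : EuclideanSpace ℝ (Fin n)) (q : Fin n → ℝ),
      (inner ℝ p (WithLp.toLp 2 q) : ℝ) = (⇑p : Fin n → ℝ) ⬝ᵥ q := by
    intro p q
    simp [PiLp.inner_apply, RCLike.inner_apply, dotProduct, conj_trivial, mul_comm]
  have key1 : z ⬝ᵥ (A *ᵥ z) = ∑ i, hA.eigenvalues i * ((inner ℝ z' (b i) : ℝ))^2 := by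
    have h0 : z ⬝ᵥ (A *ᵥ z) = (inner ℝ z' (WithLp.toLp 2 (A *ᵥ z : Fin n → ℝ)) : ℝ) := by
      rw [hinner]
    rw [h0, ← b.sum_inner_mul_inner z' (WithLp.toLp 2 (A *ᵥ z : Fin n → ℝ))]
    refine Finset.sum_congr rfl fun i _ => ?_
    have h1 : (inner ℝ (b i) (WithLp.toLp 2 (A *ᵥ z : Fin n → ℝ)) : ℝ)
        = hA.eigenvalues i * (inner ℝ (b i) (WithLp.toLp 2 z) : ℝ) := by
      rw [hinner, hinner, hsym]
    rw [h1, real_inner_comm (b i) z']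
    ring
  have key2 : z ⬝ᵥ z = ∑ i, ((inner ℝ z' (b i) : ℝ))^2 := by
    have h0 : z ⬝ᵥ z = (inner ℝ z' (WithLp.toLp 2 z) : ℝ) := by rw [hinner]
    rw [h0, ← b.sum_inner_mul_inner z' (WithLp.toLp 2 z)]
    refine Finset.sum_congr rfl fun i _ => ?_
    rw [real_inner_comm (b i) z']
    ring
  rw [key1, key2, Finset.mul_sum]
  exact Finset.sum_le_sum fun i _ => mul_le_mul_of_nonneg_right (hb i) (sq_nonneg _)

open Matrix in
lemma exists_perron {n : ℕ} [Nonempty (Fin n)] (G : SimpleGraph (Fin n)) [DecidableRel G.Adj] :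
    ∃ x : Fin n → ℝ, (∀ i, 0 ≤ x i) ∧ (∃ i, 0 < x i) ∧
      (G.adjMatrix ℝ) *ᵥ x = specRad G • x := by
  classical
  have hA : (G.adjMatrix ℝ).IsHermitian := adjMatrix_isHermitian G
  set A := G.adjMatrix ℝ with hAdef
  set μ := specRad G with hμdef
  have hμ : μ = ⨆ i, hA.eigenvalues i := specRad_eq G
  have hAt : Aᵀ = A := by simpa [Matrix.conjTranspose_eq_transpose_of_trivial] using hA.eq
  obtain ⟨i₀, hi₀⟩ := Finite.exists_max hA.eigenvalues
  have hμi₀ : μ = hA.eigenvalues i₀ := by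
    rw [hμ]
    exact le_antisymm (ciSup_le hi₀) (le_ciSup (Set.Finite.bddAbove (Set.finite_range _)) i₀)
  set x₀ : Fin n → ℝ := ⇑(hA.eigenvectorBasis i₀) with hx₀def
  have heig : A *ᵥ x₀ = μ • x₀ := by rw [hμi₀]; exact hA.mulVec_eigenvectorBasis i₀
  have hb0 : hA.eigenvectorBasis i₀ ≠ 0 := hA.eigenvectorBasis.orthonormal.ne_zero i₀
  have hex : ∃ i, x₀ i ≠ 0 := by
    by_contra h
    push_neg at h
    apply hb0
    ext j
    simpa using h j
  obtain ⟨i₁, hi₁⟩ := hex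
  set y : Fin n → ℝ := fun i => |x₀ i| with hydef
  have hyy : y ⬝ᵥ y = x₀ ⬝ᵥ x₀ := by
    simp [dotProduct, hydef, abs_mul_abs_self]
  have hxAx : x₀ ⬝ᵥ (A *ᵥ x₀) = μ * (x₀ ⬝ᵥ x₀) := by
    rw [heig, dotProduct_smul, smul_eq_mul]
  have hmono : x₀ ⬝ᵥ (A *ᵥ x₀) ≤ y ⬝ᵥ (A *ᵥ y) := by
    simp only [dotProduct, Matrix.mulVec, dotProduct]
    refine Finset.sum_le_sum fun i _ => ?_
    rw [Finset.mul_sum, Finset.mul_sum]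
    refine Finset.sum_le_sum fun j _ => ?_
    have hAij : 0 ≤ A i j := by
      rw [hAdef]
      simp only [SimpleGraph.adjMatrix_apply]
      positivity
    calc x₀ i * (A i j * x₀ j) ≤ |x₀ i * (A i j * x₀ j)| := le_abs_self _
      _ = y i * (A i j * y j) := by
          rw [abs_mul, abs_mul, abs_of_nonneg hAij]
  have hray := rayleigh_le hA y
  rw [← hμ] at hray
  have hyAy : y ⬝ᵥ (A *ᵥ y) = μ * (y ⬝ᵥ y) := by
    refine le_antisymm hray ?_
    rw [hyy, ← hxAx]
    exact hmono
  set M : Matrix (Fin n) (Fin n) ℝ := μ • (1 : Matrix (Fin n) (Fin n) ℝ) - A with hMdef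
  have hMh : M.IsHermitian := by
    have : Mᴴ = M := by
      simp [hMdef, Matrix.conjTranspose_sub, Matrix.conjTranspose_smul, hA.eq, hAt]
    exact this
  have hMdot : ∀ v : Fin n → ℝ, star v ⬝ᵥ (M *ᵥ v) = μ * (v ⬝ᵥ v) - v ⬝ᵥ (A *ᵥ v) := by
    intro v
    have hsv : star v = v := by simp
    rw [hsv]
    simp [hMdef, Matrix.sub_mulVec, Matrix.smul_mulVec, Matrix.one_mulVec,
      dotProduct_sub, dotProduct_smul, smul_eq_mul]
  have hMpsd : M.PosSemidef := by
    refine Matrix.PosSemidef.of_dotProduct_mulVec_nonneg hMh fun v => ?_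
    rw [hMdot v]
    have := rayleigh_le hA v
    rw [← hμ] at this
    linarith
  have hMy : star y ⬝ᵥ (M *ᵥ y) = 0 := by
    rw [hMdot y, hyAy]
    ring
  have hM0 : M *ᵥ y = 0 := (hMpsd.dotProduct_mulVec_zero_iff y).1 hMy
  have hAy : A *ᵥ y = μ • y := by
    have h1 : μ • y - A *ᵥ y = 0 := by
      simpa [hMdef, Matrix.sub_mulVec, Matrix.smul_mulVec, Matrix.one_mulVec] using hM0
    exact (sub_eq_zero.mp h1).symm
  exact ⟨y, fun i => abs_nonneg _, ⟨i₁, abs_pos.2 hi₁⟩, hAy⟩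

private lemma final_arith (μ nr ar E1 E2 : ℝ) (hμn : nr - 2 ≤ μ)
    (key : μ^2 + μ ≤ 2*E1 - ar*(nr-1) + ar*μ)
    (hcompl : 2*E1 + 2*E2 = nr*(nr-1))
    (hprod : 0 ≤ (μ - (nr-2)) * (μ + (nr-1) - ar)) :
    2*E2 + ar + 2 ≤ 2*nr := by
  nlinarith [key, hcompl, hprod]

/-- If δ(G) ≥ a ≥ 1 and ρ(G) ≥ n - 2, then e(Ḡ) ≤ n - ⌈a/2⌉ - 1. -/
theorem complement_edges_le_of_specRad {n a : ℕ} (ha : 1 ≤ a)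
    (G : SimpleGraph (Fin n)) [DecidableRel G.Adj]
    (hδ : a ≤ G.minDegree) (hρ : (n : ℝ) - 2 ≤ specRad G) :
    Gᶜ.edgeFinset.card + (a + 1) / 2 + 1 ≤ n := by
  classical
  rcases Nat.lt_or_ge n 2 with hn | hn2
  · interval_cases n
    · have h0 : G.minDegree = 0 := by
        simp [SimpleGraph.minDegree, Finset.univ_eq_empty]
      omega
    · have h0 : G.degree 0 = 0 := by
        have := G.degree_lt_card_verts 0
        rw [Fintype.card_fin] at this
        omega
      have := G.minDegree_le_degree (0 : Fin 1)
      omega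
  -- main case : n ≥ 2
  have hne : Nonempty (Fin n) := ⟨⟨0, by omega⟩⟩
  obtain ⟨x, hx0, ⟨i₁, hi₁⟩, heigvec⟩ := exists_perron G
  set μ := specRad G with hμdef
  clear_value μ
  have hμn : (n:ℝ) - 2 ≤ μ := hρ
  have hn2R : (2:ℝ) ≤ (n:ℝ) := by exact_mod_cast hn2
  have hμ0 : 0 ≤ μ := by linarith
  obtain ⟨u, hu⟩ := Finite.exists_max x
  have hxu : 0 < x u := lt_of_lt_of_le hi₁ (hu i₁)
  set z : Fin n → ℝ := fun i => x i / x u with hzdef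
  have hz0 : ∀ i, 0 ≤ z i := fun i => div_nonneg (hx0 i) hxu.le
  have hz1 : ∀ i, z i ≤ 1 := fun i => (div_le_one hxu).2 (hu i)
  have hzu : z u = 1 := div_self hxu.ne'
  have heq : ∀ v, ∑ w ∈ G.neighborFinset v, z w = μ * z v := by
    intro v
    have h1 : (Matrix.mulVec (G.adjMatrix ℝ) x) v = μ * x v := by
      rw [heigvec]; simp [smul_eq_mul]
    rw [SimpleGraph.adjMatrix_mulVec_apply] at h1
    simp only [hzdef]
    rw [← Finset.sum_div, h1, mul_div_assoc]
  set d : Fin n → ℝ := fun v => (G.degree v : ℝ) with hddef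
  have hsum_deg : ∑ v, d v = 2 * (G.edgeFinset.card : ℝ) := by
    rw [hddef, ← Nat.cast_sum]
    push_cast [G.sum_degrees_eq_twice_card_edges]
    norm_num
  -- identity I : ∑ v, d v * z v = μ * ∑ v, z v
  have hI : ∑ v, d v * z v = μ * ∑ v, z v := by
    have hdeg : ∀ v, d v = ∑ w, (if G.Adj w v then (1:ℝ) else 0) := by
      intro v
      have hfe : (Finset.univ.filter fun w => G.Adj w v) = Finset.univ.filter fun w => G.Adj v w :=
        Finset.filter_congr (fun w _ => by rw [SimpleGraph.adj_comm])
      rw [Finset.sum_boole, hfe]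
      simp [hddef, SimpleGraph.degree, SimpleGraph.neighborFinset_eq_filter]
    calc ∑ v, d v * z v = ∑ v, ∑ w, (if G.Adj w v then z v else 0) := by
          refine Finset.sum_congr rfl fun v _ => ?_
          rw [hdeg v, Finset.sum_mul]
          refine Finset.sum_congr rfl fun w _ => ?_
          split <;> simp
      _ = ∑ w, ∑ v, (if G.Adj w v then z v else 0) := Finset.sum_comm
      _ = ∑ w, μ * z w := by
          refine Finset.sum_congr rfl fun w _ => ?_
          rw [← heq w, SimpleGraph.neighborFinset_eq_filter, Finset.sum_filter]
      _ = μ * ∑ w, z w := by rw [Finset.mul_sum]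
  -- partition
  set Nu := G.neighborFinset u with hNudef
  set S := (Finset.univ \ insert u Nu : Finset (Fin n)) with hSdef
  have hu_not : u ∉ Nu := by simp [hNudef]
  have hsplit : ∀ f : Fin n → ℝ, ∑ v, f v = f u + (∑ v ∈ Nu, f v) + ∑ v ∈ S, f v := by
    intro f
    have h1 : (∑ v ∈ S, f v) + ∑ v ∈ insert u Nu, f v = ∑ v, f v :=
      Finset.sum_sdiff (Finset.subset_univ _)
    rw [Finset.sum_insert hu_not] at h1
    linarith
  have hNuz : ∑ w ∈ Nu, z w = μ := by rw [hNudef, heq u, hzu, mul_one]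
  have hNucard : (Nu.card : ℝ) = d u := by
    have h : G.degree u = Nu.card := by rw [hNudef]; rfl
    simp only [hddef, h]
  have hduμ : μ ≤ d u := by
    calc μ = ∑ w ∈ Nu, z w := hNuz.symm
      _ ≤ ∑ w ∈ Nu, 1 := Finset.sum_le_sum fun w _ => hz1 w
      _ = (Nu.card : ℝ) := by rw [Finset.sum_const]; simp
      _ = d u := hNucard
  have hdun_nat : G.degree u + 1 ≤ n := by
    have := G.degree_lt_card_verts u
    simpa [Fintype.card_fin] using this
  have hdun : d u ≤ (n:ℝ) - 1 := by
    have : ((G.degree u : ℕ) : ℝ) + 1 ≤ (n : ℝ) := by exact_mod_cast hdun_nat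
    simp only [hddef]
    linarith
  have hda : ∀ v, (a:ℝ) ≤ d v := by
    intro v
    have h := le_trans hδ (G.minDegree_le_degree v)
    simp only [hddef]
    exact_mod_cast h
  -- degrees in S are at most n - 2
  have hdS : ∀ w ∈ S, d w ≤ (n:ℝ) - 2 := by
    intro w hw
    rw [hSdef] at hw
    simp only [Finset.mem_sdiff, Finset.mem_univ, true_and, Finset.mem_insert,
      not_or, hNudef, SimpleGraph.mem_neighborFinset] at hw
    obtain ⟨hwu, hwadj⟩ := hw
    have hnat : G.degree w + 2 ≤ n := by
      have hsub : G.neighborFinset w ⊆ (Finset.univ.erase u).erase w := by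
        intro v hv
        rw [SimpleGraph.mem_neighborFinset] at hv
        rw [Finset.mem_erase, Finset.mem_erase]
        refine ⟨fun hvw => ?_, fun hvu => ?_, Finset.mem_univ v⟩
        · exact G.irrefl (hvw ▸ hv)
        · exact hwadj (((hvu ▸ hv : G.Adj w u)).symm)
      have hcard := Finset.card_le_card hsub
      have h1 : w ∈ Finset.univ.erase u := Finset.mem_erase.2 ⟨hwu, Finset.mem_univ w⟩
      rw [Finset.card_erase_of_mem h1, Finset.card_erase_of_mem (Finset.mem_univ u),
        Finset.card_univ, Fintype.card_fin] at hcard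
      have := G.degree_lt_card_verts w
      simp only [SimpleGraph.degree] at hcard ⊢
      omega
    have : ((G.degree w : ℕ) : ℝ) + 2 ≤ (n : ℝ) := by exact_mod_cast hnat
    simp only [hddef]
    linarith
  have hScard : (S.card : ℝ) = (n:ℝ) - 1 - d u := by
    have h1 : S.card + (Nu.card + 1) = n := by
      have hc1 : (insert u Nu).card = Nu.card + 1 := Finset.card_insert_of_notMem hu_not
      have hc2 : (insert u Nu).card ≤ n := by
        have := Finset.card_le_card (Finset.subset_univ (insert u Nu))
        simpa [Finset.card_univ, Fintype.card_fin] using this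
      have hc3 : S.card = n - (insert u Nu).card := by
        rw [hSdef, Finset.card_sdiff_of_subset (Finset.subset_univ _), Finset.card_univ, Fintype.card_fin]
      omega
    have h2 : ((S.card : ℕ) : ℝ) + ((Nu.card : ℕ) : ℝ) + 1 = (n : ℝ) := by exact_mod_cast h1
    rw [hNucard] at h2
    linarith
  -- main estimates
  have hT1 : ∑ w ∈ S, d w * z w ≤ μ * ∑ w ∈ S, z w := by
    rw [Finset.mul_sum]
    refine Finset.sum_le_sum fun w hw => ?_
    exact mul_le_mul_of_nonneg_right (le_trans (hdS w hw) (by linarith)) (hz0 w)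
  have hT2 : ∑ w ∈ Nu, d w * z w ≤ (∑ w ∈ Nu, d w) - (a:ℝ) * d u + (a:ℝ) * μ := by
    have hstep : ∀ w ∈ Nu, d w * z w ≤ (d w - (a:ℝ)) + (a:ℝ) * z w := by
      intro w _
      nlinarith [hda w, hz1 w, hz0 w]
    calc ∑ w ∈ Nu, d w * z w ≤ ∑ w ∈ Nu, ((d w - (a:ℝ)) + (a:ℝ) * z w) :=
          Finset.sum_le_sum hstep
      _ = (∑ w ∈ Nu, d w) - (a:ℝ) * Nu.card + (a:ℝ) * ∑ w ∈ Nu, z w := by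
          rw [Finset.sum_add_distrib, Finset.sum_sub_distrib, Finset.sum_const, Finset.mul_sum]
          simp [mul_comm]
      _ = (∑ w ∈ Nu, d w) - (a:ℝ) * d u + (a:ℝ) * μ := by rw [hNucard, hNuz]
  have hT3 : (a:ℝ) * S.card ≤ ∑ w ∈ S, d w := by
    calc (a:ℝ) * S.card = ∑ w ∈ S, (a:ℝ) := by rw [Finset.sum_const]; simp [mul_comm]
      _ ≤ ∑ w ∈ S, d w := Finset.sum_le_sum fun w _ => hda w
  -- combine everything
  have e1 := hsplit (fun v => d v * z v)
  have e2 := hsplit z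
  have e3 := hsplit d
  simp only [hzu, mul_one] at e1
  rw [hzu, hNuz] at e2
  have hIexp : ∑ v, d v * z v = μ + μ^2 + μ * (∑ w ∈ S, z w) := by
    rw [hI, e2]; ring
  have hT3' : (a:ℝ) * ((n:ℝ)-1) - (a:ℝ) * d u ≤ ∑ w ∈ S, d w := by
    have h := hT3
    rw [hScard] at h
    nlinarith [h]
  have key : μ^2 + μ ≤ 2 * (G.edgeFinset.card:ℝ) - (a:ℝ) * ((n:ℝ) - 1) + (a:ℝ) * μ := by
    linarith [hT1, hT2, hT3', hsum_deg, e1, e3, hIexp]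
  -- complement edge count
  have hvd : ∀ v : Fin n, G.degree v + Gᶜ.degree v = n - 1 := by
    intro v
    rw [SimpleGraph.degree_compl, Fintype.card_fin]
    have := G.degree_lt_card_verts v
    rw [Fintype.card_fin] at this
    omega
  have hcompl_nat : 2 * G.edgeFinset.card + 2 * Gᶜ.edgeFinset.card = n * (n - 1) := by
    rw [← G.sum_degrees_eq_twice_card_edges, ← Gᶜ.sum_degrees_eq_twice_card_edges,
      ← Finset.sum_add_distrib]
    simp only [hvd]
    rw [Finset.sum_const, Finset.card_univ, Fintype.card_fin, smul_eq_mul]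
  have hcompl : 2 * (G.edgeFinset.card:ℝ) + 2 * (Gᶜ.edgeFinset.card:ℝ) = (n:ℝ) * ((n:ℝ) - 1) := by
    have h1 : ((2 * G.edgeFinset.card + 2 * Gᶜ.edgeFinset.card : ℕ) : ℝ)
        = ((n * (n-1) : ℕ) : ℝ) := Nat.cast_inj.mpr hcompl_nat
    push_cast [Nat.cast_sub (by omega : 1 ≤ n)] at h1
    linarith
  have haR : (a:ℝ) ≤ (n:ℝ) - 1 := le_trans (hda u) hdun
  have ha1 : (1:ℝ) ≤ (a:ℝ) := by exact_mod_cast ha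
  have final : 2*(Gᶜ.edgeFinset.card:ℝ) + (a:ℝ) + 2 ≤ 2*(n:ℝ) := by
    have hprod : 0 ≤ (μ - ((n:ℝ)-2)) * (μ + ((n:ℝ)-1) - (a:ℝ)) :=
      mul_nonneg (sub_nonneg.2 hμn) (by linarith)
    exact final_arith μ (n:ℝ) (a:ℝ) _ _ hμn key hcompl hprod
  have hnat : 2 * Gᶜ.edgeFinset.card + a + 2 ≤ 2 * n := by exact_mod_cast final
  omega
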